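/- Monotone trajectory lemma for implication-form Lyapunov functions: let v : ℝ≥0 → ℝ≥0 be continuous, let w ≥ 0 be a constant, and suppose that at every t where v(t) > w, the upper right Dini derivative satisfies D⁺v(t) ≤ −α(v(t)) for a positive definite continuous α (α(s) > 0 for s > 0, α(0)=0). Then v(t) ≤ max(v(0), w) for all t ≥ 0. -/

import Mathlib

open Set Filter

/-- invariance of sublevel sets for implication-form Lyapunov
dissipation inequalities with Dini derivatives. -/
theorem sublevel_invariance (v : ℝ → ℝ) (w : ℝ) (α : ℝ → ℝ)
    (hvcont : Continuous v) (hvnonneg : ∀ t ≥ (0:ℝ), 0 ≤ v t)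
    (hw : 0 ≤ w)
    (hαcont : Continuous α) (hα0 : α 0 = 0) (hαpos : ∀ s > (0:ℝ), 0 < α s)
    (hdini : ∀ t ≥ (0:ℝ), v t > w →
      Filter.limsup (fun h : ℝ => (v (t + h) - v t) / h)
        (nhdsWithin 0 (Set.Ioi 0)) ≤ -α (v t)) :
    ∀ t ≥ (0:ℝ), v t ≤ max (v 0) w := by
  intro t ht
  by_contra hcon
  push_neg at hcon
  set M := max (v 0) w with hM
  have ht0 : 0 < t := by
    rcases lt_or_eq_of_le ht with h | h
    · exact h
    · exfalso; rw [← h] at hcon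
      exact absurd (le_max_left (v 0) w) (not_le.2 hcon)
  set c := (M + v t) / 2 with hc
  have hMc : M < c := by rw [hc]; linarith
  have hcv : c < v t := by rw [hc]; linarith
  have hwc : w < c := lt_of_le_of_lt (le_max_right _ _) hMc
  have hc0 : 0 < c := lt_of_le_of_lt hw hwc
  set S := {s : ℝ | s ∈ Icc 0 t ∧ v s ≤ c} with hS
  have hSne : S.Nonempty :=
    ⟨0, ⟨le_refl 0, le_of_lt ht0⟩, le_of_lt (lt_of_le_of_lt (le_max_left _ _) hMc)⟩
  have hSbdd : BddAbove S := ⟨t, fun s hs => hs.1.2⟩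
  have hSclosed : IsClosed S := by
    have : S = Icc 0 t ∩ v ⁻¹' (Iic c) := rfl
    rw [this]
    exact isClosed_Icc.inter (isClosed_Iic.preimage hvcont)
  set t₀ := sSup S with ht₀
  have ht₀mem : t₀ ∈ S := hSclosed.csSup_mem hSne hSbdd
  have ht₀0 : 0 ≤ t₀ := ht₀mem.1.1
  have ht₀le : t₀ ≤ t := ht₀mem.1.2
  have ht₀lt : t₀ < t := lt_of_le_of_ne ht₀le (by
    intro h; rw [h] at ht₀mem; exact absurd ht₀mem.2 (not_le.2 hcv))
  have hgt : ∀ s ∈ Ioc t₀ t, c < v s := by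
    intro s hs
    by_contra hle
    push_neg at hle
    have : s ∈ S := ⟨⟨le_trans ht₀0 (le_of_lt hs.1), hs.2⟩, hle⟩
    exact absurd (le_csSup hSbdd this) (not_le.2 hs.1)
  have hvt₀ : v t₀ = c := by
    refine le_antisymm ht₀mem.2 ?_
    haveI : (nhdsWithin t₀ (Ioi t₀)).NeBot := nhdsGT_neBot t₀
    have hev : ∀ᶠ s in nhdsWithin t₀ (Ioi t₀), c ≤ v s := by
      have hmem : Ioc t₀ t ∈ nhdsWithin t₀ (Ioi t₀) :=
        Ioc_mem_nhdsGT_of_mem ⟨le_refl _, ht₀lt⟩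
      filter_upwards [hmem] with s hs
      exact le_of_lt (hgt s hs)
    exact ge_of_tendsto ((hvcont.tendsto t₀).mono_left nhdsWithin_le_nhds) hev
  have hαc : 0 < α c := hαpos c hc0
  set u := fun h : ℝ => (v (t₀ + h) - v t₀) / h with hu
  have hlim : limsup u (nhdsWithin (0:ℝ) (Ioi 0)) ≤ -α c := by
    rw [← hvt₀]
    exact hdini t₀ ht₀0 (by rw [hvt₀]; exact hwc)
  have hev : ∀ᶠ h in nhdsWithin (0:ℝ) (Ioi 0), 0 < u h := by
    have hmem : Ioo (0:ℝ) (t - t₀) ∈ nhdsWithin (0:ℝ) (Ioi 0) :=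
      Ioo_mem_nhdsGT_of_mem ⟨le_refl _, sub_pos.2 ht₀lt⟩
    filter_upwards [hmem] with h hh
    have hmem2 : t₀ + h ∈ Ioc t₀ t := ⟨by linarith [hh.1], by linarith [hh.2]⟩
    have := hgt _ hmem2
    have : 0 < v (t₀ + h) - v t₀ := by rw [hvt₀]; linarith
    exact div_pos this hh.1
  haveI : (nhdsWithin (0:ℝ) (Ioi 0)).NeBot := nhdsGT_neBot (0:ℝ)
  by_cases hb : IsBoundedUnder (· ≤ ·) (nhdsWithin (0:ℝ) (Ioi 0)) u
  · have hlt : ∀ᶠ h in nhdsWithin (0:ℝ) (Ioi 0), u h < 0 :=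
      eventually_lt_of_limsup_lt (lt_of_le_of_lt hlim (by linarith)) hb
    have hfalse : ∀ᶠ h in nhdsWithin (0:ℝ) (Ioi 0), False := by
      filter_upwards [hev, hlt] with h h1 h2; linarith
    obtain ⟨_, hf⟩ := hfalse.exists
    exact hf
  · have hzero : limsup u (nhdsWithin (0:ℝ) (Ioi 0)) = 0 := by
      rw [limsup_eq]
      convert Real.sInf_empty using 2
      · rfl
      ext a
      simp only [mem_setOf_eq, mem_empty_iff_false, iff_false]
      intro ha
      exact hb ⟨a, ha⟩
    rw [hzero] at hlim
    linarith
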